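/- Every closed walk in the hypercube graph H(d,2) based at the all-zeros vertex 0 is ×-homotopic rel endpoints to the trivial (length-0) walk at 0. -/

import Mathlib

/-- The Hamming graph `H(d,q)`: vertices are functions `Fin d → Fin q`,
adjacent iff they differ in exactly one coordinate. -/
def hammingGraph (d q : ℕ) : SimpleGraph (Fin d → Fin q) where
  Adj v w := ∃! i, v i ≠ w i
  symm := by
    constructor
    rintro v w ⟨i, hi, hu⟩
    exact ⟨i, hi.symm, fun j hj => hu j hj.symm⟩
  loopless := by
    constructor
    rintro v ⟨i, hi, -⟩
    exact hi rfl

/-- `l` is (the list of vertices of) a walk in `G` from `a` to `b`. -/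
def IsWalkOn {V : Type*} (G : SimpleGraph V) (a b : V) (l : List V) : Prop :=
  l.Chain' G.Adj ∧ l.head? = some a ∧ l.getLast? = some b

/-- Elementary moves on walks: prunes (and their inverses, anti-prunes,
via symmetry) and spider moves. -/
inductive Move {V : Type*} (G : SimpleGraph V) : List V → List V → Prop
  | prune (xs ys : List V) (u v : V) (huv : G.Adj u v) :
      Move G (xs ++ u :: v :: u :: ys) (xs ++ u :: ys)
  | spider (xs ys : List V) (u v v' w : V) (hne : v ≠ v')
      (h1 : G.Adj u v') (h2 : G.Adj v' w) :
      Move G (xs ++ u :: v :: w :: ys) (xs ++ u :: v' :: w :: ys)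

/-- ×-homotopy rel endpoints: the equivalence relation generated by prunes,
anti-prunes and spider moves. -/
def Homotopic {V : Type*} (G : SimpleGraph V) : List V → List V → Prop :=
  Relation.EqvGen (Move G)

/-- Concatenation of walks sharing an endpoint. -/
def wcat {V : Type*} (l1 l2 : List V) : List V := l1 ++ l2.tail

/-- Concatenation of a list of closed walks based at `z`. -/
def wprod {V : Type*} (z : V) (ws : List (List V)) : List V := ws.foldr wcat [z]

/-- `u` and `v` differ exactly in coordinate `i`. -/
def DiffAt {d q : ℕ} (u v : Fin d → Fin q) (i : Fin d) : Prop :=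
  u i ≠ v i ∧ ∀ j, j ≠ i → u j = v j

/-- A ground walk in coordinate `i`: a closed 3-walk at the all-zeros vertex
whose intermediate vertices are nonzero only in coordinate `i`. -/
def IsGroundWalk (d q : ℕ) [NeZero q] (i : Fin d) (l : List (Fin d → Fin q)) : Prop :=
  ∃ a b : Fin q, a ≠ 0 ∧ b ≠ 0 ∧ a ≠ b ∧
    l = [(0 : Fin d → Fin q), Function.update (0 : Fin d → Fin q) i a,
      Function.update (0 : Fin d → Fin q) i b, 0]

/-- Number of steps of a walk in which coordinate `i` changes. -/
def changeCount {d q : ℕ} (i : Fin d) : List (Fin d → Fin q) → ℕ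
  | x :: y :: rest => (if x i = y i then 0 else 1) + changeCount i (y :: rest)
  | _ => 0

namespace Stmt5Aux

variable {d : ℕ}

/-- Weight of a hypercube vertex: sum of its bits. -/
def wt (v : Fin d → Fin 2) : ℕ := ∑ j, (v j).val

lemma wt_zero : wt (0 : Fin d → Fin 2) = 0 := by simp [wt]

lemma wt_eq_zero {x : Fin d → Fin 2} (h : wt x = 0) : x = 0 := by
  funext j
  have := (Finset.sum_eq_zero_iff.mp h) j (Finset.mem_univ j)
  exact Fin.ext this

lemma wt_agree {u v : Fin d → Fin 2} {i : Fin d} (h : ∀ j, j ≠ i → u j = v j) :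
    wt u + (v i).val = wt v + (u i).val := by
  unfold wt
  rw [← Finset.add_sum_erase _ (fun j => (u j).val) (Finset.mem_univ i),
      ← Finset.add_sum_erase _ (fun j => (v j).val) (Finset.mem_univ i)]
  have hs : ∑ j ∈ Finset.univ.erase i, (u j).val
      = ∑ j ∈ Finset.univ.erase i, (v j).val := by
    refine Finset.sum_congr rfl fun j hj => ?_
    rw [h j (Finset.ne_of_mem_erase hj)]
  rw [hs]; ring

lemma adj_intro {u v : Fin d → Fin 2} (i : Fin d) (h : u i ≠ v i)
    (h2 : ∀ j, j ≠ i → u j = v j) : (hammingGraph d 2).Adj u v := by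
  refine ⟨i, h, fun k hk => ?_⟩
  by_contra hne
  exact hk (h2 k hne)

lemma adj_elim {u v : Fin d → Fin 2} (h : (hammingGraph d 2).Adj u v) :
    ∃ i, u i ≠ v i ∧ ∀ j, j ≠ i → u j = v j := by
  obtain ⟨i, hi, hu⟩ := h
  exact ⟨i, hi, fun j hj => by_contra fun hne => hj (hu j hne)⟩

lemma adj_wt {u v : Fin d → Fin 2} (h : (hammingGraph d 2).Adj u v) :
    wt u + 1 = wt v ∨ wt v + 1 = wt u := by
  obtain ⟨i, hi, hag⟩ := adj_elim h
  have h1 := wt_agree hag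
  have h2 : (u i).val ≠ (v i).val := fun he => hi (Fin.ext he)
  have h3 := (u i).isLt
  have h4 := (v i).isLt
  omega

/-- At a strict local max `b` with distinct neighbors `a c`, there is a lower
common neighbor `v'`. -/
lemma peak_spider {a b c : Fin d → Fin 2} (hab : (hammingGraph d 2).Adj a b)
    (hbc : (hammingGraph d 2).Adj b c) (hac : a ≠ c)
    (h1 : wt a < wt b) (h2 : wt c < wt b) :
    ∃ v', v' ≠ b ∧ (hammingGraph d 2).Adj a v' ∧ (hammingGraph d 2).Adj v' c ∧
      wt v' + 2 = wt b := by
  obtain ⟨i, hi, hagab⟩ := adj_elim hab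
  obtain ⟨j, hj, hagbc⟩ := adj_elim hbc
  have htriple : ∀ x y z : Fin 2, x ≠ y → y ≠ z → x = z := by decide
  have hij : i ≠ j := by
    rintro rfl
    apply hac; funext k
    by_cases hk : k = i
    · subst hk; exact htriple _ _ _ hi hj
    · rw [hagab k hk, hagbc k hk]
  have e1 := wt_agree hagab
  have e2 := wt_agree hagbc
  have hilt := (a i).isLt; have hilt2 := (b i).isLt
  have hjlt := (b j).isLt; have hjlt2 := (c j).isLt
  have hvi : (a i).val ≠ (b i).val := fun he => hi (Fin.ext he)
  have hvj : (b j).val ≠ (c j).val := fun he => hj (Fin.ext he)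
  have hai : (a i).val = 0 ∧ (b i).val = 1 := by omega
  have hbj : (b j).val = 1 ∧ (c j).val = 0 := by omega
  refine ⟨Function.update a j (c j), ?_, ?_, ?_, ?_⟩
  · intro he
    apply hi
    rw [← he, Function.update_of_ne hij]
  · -- Adj a v'
    refine adj_intro j ?_ ?_
    · rw [Function.update_self, hagab j (fun h => hij h.symm)]
      exact hj
    · intro k hk
      rw [Function.update_of_ne hk]
  · -- Adj v' c
    refine adj_intro i ?_ ?_
    · rw [Function.update_of_ne hij, ← hagbc i hij]
      exact hi
    · intro k hk
      by_cases hkj : k = j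
      · subst hkj; rw [Function.update_self]
      · rw [Function.update_of_ne hkj, hagab k hk, hagbc k hkj]
  · -- weight
    have hag : ∀ k, k ≠ j → Function.update a j (c j) k = a k :=
      fun k hk => Function.update_of_ne hk _ _
    have e3 := wt_agree hag
    rw [Function.update_self] at e3
    have haj : (a j).val = 1 := by rw [hagab j (fun h => hij h.symm)]; exact hbj.1
    omega

lemma find_peak : ∀ (l : List (Fin d → Fin 2)) (u v : Fin d → Fin 2),
    (u :: v :: l).Chain' (hammingGraph d 2).Adj → wt u < wt v →
    (v :: l).getLast? = some 0 →
    ∃ xs a b c ys, u :: v :: l = xs ++ a :: b :: c :: ys ∧ wt a < wt b ∧ wt c < wt b := by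
  intro l
  induction l with
  | nil =>
    intro u v _ hlt hlast
    simp only [List.getLast?_singleton, Option.some.injEq] at hlast
    rw [hlast, wt_zero] at hlt
    omega
  | cons c rest ih =>
    intro u v hc hlt hlast
    have huv : (hammingGraph d 2).Adj u v := (List.isChain_cons_cons.mp hc).1
    have hc2 : (v :: c :: rest).Chain' (hammingGraph d 2).Adj := (List.isChain_cons_cons.mp hc).2
    have hvc : (hammingGraph d 2).Adj v c := (List.isChain_cons_cons.mp hc2).1
    rcases adj_wt hvc with h | h
    · -- wt v + 1 = wt c : recurse
      obtain ⟨xs, a, b, c', ys, heq, hh1, hh2⟩ :=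
        ih v c hc2 (by omega) (by rwa [List.getLast?_cons_cons] at hlast)
      exact ⟨u :: xs, a, b, c', ys, by rw [List.cons_append, ← heq], hh1, hh2⟩
    · -- wt c + 1 = wt v : peak here
      exact ⟨[], u, v, c, rest, rfl, hlt, by omega⟩

lemma head?_stable {α : Type*} (xs : List α) (a : α) (t t' : List α) :
    (xs ++ a :: t).head? = (xs ++ a :: t').head? := by
  cases xs <;> simp

lemma getLast?_tail3 {α : Type*} (xs : List α) (a b c : α) (ys : List α) :
    (xs ++ a :: b :: c :: ys).getLast? = (c :: ys).getLast? := by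
  rw [show xs ++ a :: b :: c :: ys = (xs ++ [a, b]) ++ c :: ys by simp,
    List.getLast?_append_cons]

lemma reduce (l : List (Fin d → Fin 2)) (hl : IsWalkOn (hammingGraph d 2) 0 0 l)
    (hpos : 0 < (l.map wt).sum) :
    ∃ l', Move (hammingGraph d 2) l l' ∧ IsWalkOn (hammingGraph d 2) 0 0 l' ∧
      (l'.map wt).sum < (l.map wt).sum := by
  obtain ⟨hc, hh, hlast⟩ := hl
  match l, hh with
  | x :: t, hh =>
  have hx : x = 0 := by simpa using hh
  subst hx
  match t with
  | [] => simp [wt_zero] at hpos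
  | v :: rest =>
  have h0v : (hammingGraph d 2).Adj 0 v := (List.isChain_cons_cons.mp hc).1
  have hwv : 0 < wt v := by
    rcases adj_wt h0v with h | h <;> rw [wt_zero] at h <;> omega
  obtain ⟨xs, a, b, c, ys, heq, hab', hcb'⟩ :=
    find_peak rest 0 v hc (by rw [wt_zero]; exact hwv)
      (by rwa [List.getLast?_cons_cons] at hlast)
  rw [heq] at hc hh hlast hpos ⊢
  obtain ⟨hcxs, hcmid, hbd⟩ := List.isChain_append.mp hc
  have hab : (hammingGraph d 2).Adj a b := (List.isChain_cons_cons.mp hcmid).1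
  have hcmid2 := (List.isChain_cons_cons.mp hcmid).2
  have hbc : (hammingGraph d 2).Adj b c := (List.isChain_cons_cons.mp hcmid2).1
  have hcys : (c :: ys).Chain' (hammingGraph d 2).Adj := (List.isChain_cons_cons.mp hcmid2).2
  rcases eq_or_ne c a with rfl | hac
  · -- prune case
    refine ⟨xs ++ c :: ys, Move.prune xs ys c b hab, ⟨?_, ?_, ?_⟩, ?_⟩
    · refine List.isChain_append.mpr ⟨hcxs, hcys, ?_⟩
      intro p hp q hq
      exact hbd p hp q (by simpa using hq)
    · rw [← hh]; exact head?_stable _ _ _ _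
    · rw [← hlast, getLast?_tail3, List.getLast?_append_cons]
    · simp only [List.map_append, List.sum_append, List.map_cons, List.sum_cons]
      omega
  · -- spider case
    obtain ⟨v', hv'b, hav', hv'c, hwt⟩ := peak_spider hab hbc (Ne.symm hac) hab' hcb'
    refine ⟨xs ++ a :: v' :: c :: ys,
      Move.spider xs ys a b v' c (Ne.symm hv'b) hav' hv'c, ⟨?_, ?_, ?_⟩, ?_⟩
    · refine List.isChain_append.mpr ⟨hcxs, ?_, ?_⟩
      · exact List.isChain_cons_cons.mpr ⟨hav', List.isChain_cons_cons.mpr ⟨hv'c, hcys⟩⟩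
      · intro p hp q hq
        exact hbd p hp q (by simpa using hq)
    · rw [← hh]; exact head?_stable _ _ _ _
    · rw [← hlast, getLast?_tail3, getLast?_tail3]
    · simp only [List.map_append, List.sum_append, List.map_cons, List.sum_cons]
      omega

lemma aux : ∀ (n : ℕ) (l : List (Fin d → Fin 2)), (l.map wt).sum = n →
    IsWalkOn (hammingGraph d 2) 0 0 l → Homotopic (hammingGraph d 2) l [0] := by
  intro n
  induction n using Nat.strong_induction_on with
  | _ n ih =>
    intro l hs hl
    rcases Nat.eq_zero_or_pos n with rfl | hpos
    · -- all-zero walk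
      obtain ⟨hc, hh, _⟩ := hl
      match l, hh with
      | x :: t, hh =>
      have hx : x = 0 := by simpa using hh
      subst hx
      match t with
      | [] => exact Relation.EqvGen.refl _
      | y :: t' =>
        exfalso
        have hy : wt y = 0 := by
          simp only [List.map_cons, List.sum_cons] at hs
          omega
        have h0y : (hammingGraph d 2).Adj 0 y := (List.isChain_cons_cons.mp hc).1
        rw [wt_eq_zero hy] at h0y
        exact (hammingGraph d 2).loopless.irrefl 0 h0y
    · obtain ⟨l', mv, hl', hlt⟩ := reduce l hl (hs ▸ hpos)
      exact Relation.EqvGen.trans _ _ _ (Relation.EqvGen.rel _ _ mv)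
        (ih _ (hs ▸ hlt) _ rfl hl')

end Stmt5Aux

/-- every closed walk in the hypercube `H(d,2)` based at the all-zeros
vertex is ×-homotopic rel endpoints to the trivial walk. -/
theorem stmt5 (d : ℕ) (l : List (Fin d → Fin 2))
    (hl : IsWalkOn (hammingGraph d 2) 0 0 l) :
    Homotopic (hammingGraph d 2) l [0] :=
  Stmt5Aux.aux _ l rfl hl
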